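/- For every i ∈ {κ+1, …, n−1}, one has bar-α_i = α_i/α_{k(i)} and bar-α_i > α_i. -/

import Mathlib

open Finset

/-- `rhoProd ρ k j = ∏_{i=k+1}^{j} ρ i`. -/
noncomputable def rhoProd (ρ : ℕ → ℝ) (k j : ℕ) : ℝ := ∏ i ∈ Finset.Icc (k + 1) j, ρ i

/-- `k` is a binding index: `k ∈ {κ+1, …, n-1}` and `ρ_{k,j} < 1` for all `j ∈ {k+1, …, n-1}`. -/
def Binding (ρ : ℕ → ℝ) (n κ k : ℕ) : Prop :=
  κ + 1 ≤ k ∧ k ≤ n - 1 ∧ ∀ j, k + 1 ≤ j → j ≤ n - 1 → rhoProd ρ k j < 1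

/-- `kmin ρ n κ i = min {k ∈ H : k ≥ i}`, the smallest binding index `≥ i`. -/
noncomputable def kmin (ρ : ℕ → ℝ) (n κ i : ℕ) : ℕ :=
  sInf {k | Binding ρ n κ k ∧ i ≤ k}

/-- `bar-α_i`: equals `α i` for `i ≤ κ` and `(ρ_{i, k(i)})⁻¹` for `i > κ`. -/
noncomputable def barAlpha (ρ α : ℕ → ℝ) (n κ i : ℕ) : ℝ :=
  if i ≤ κ then α i else (rhoProd ρ i (kmin ρ n κ i))⁻¹

theorem stmt7 (n : ℕ) (hn : 2 ≤ n) (ρ α : ℕ → ℝ)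
    (hρ : ∀ i, 1 ≤ i → i ≤ n → 0 < ρ i)
    (hα0pos : 0 < α 0) (hα0le : α 0 ≤ 1)
    (hrec : ∀ k, 1 ≤ k → k ≤ n → α k = min (α (k - 1) * ρ k) 1)
    (κ : ℕ) (hκle : κ ≤ n - 1) (hκ1 : α κ = 1)
    (hκmax : ∀ k, k ≤ n - 1 → α k = 1 → k ≤ κ) :
    ∀ i, κ + 1 ≤ i → i ≤ n - 1 →
      barAlpha ρ α n κ i = α i / α (kmin ρ n κ i) ∧ α i < barAlpha ρ α n κ i := by
  have hprodpos : ∀ a b : ℕ, b ≤ n - 1 → 0 < rhoProd ρ a b := by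
    intro a b hb
    apply Finset.prod_pos
    intro x hx
    simp only [Finset.mem_Icc] at hx
    exact hρ x (by omega) (by omega)
  have hαle : ∀ k, 1 ≤ k → k ≤ n → α k ≤ 1 := by
    intro k h1 h2; rw [hrec k h1 h2]; exact min_le_right _ _
  have hαlt : ∀ k, κ + 1 ≤ k → k ≤ n - 1 → α k < 1 := by
    intro k h1 h2
    rcases lt_or_eq_of_le (hαle k (by omega) (by omega)) with h | h
    · exact h
    · exact absurd (hκmax k h2 h) (by omega)
  have hmain : ∀ j, κ ≤ j → j ≤ n - 1 → α j = rhoProd ρ κ j := by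
    intro j
    induction j with
    | zero =>
      intro h1 _
      have hk0 : κ = 0 := by omega
      subst hk0
      simp [rhoProd, hκ1]
    | succ m ih =>
      intro h1 h2
      rcases Nat.lt_or_ge κ (m + 1) with h | h
      · have ham : α m = rhoProd ρ κ m := ih (by omega) (by omega)
        have hlt : α (m + 1) < 1 := hαlt (m + 1) (by omega) h2
        have hrec' := hrec (m + 1) (by omega) (by omega)
        simp only [Nat.add_sub_cancel] at hrec'
        have hx : α m * ρ (m + 1) < 1 := by
          rw [hrec'] at hlt
          rcases min_lt_iff.mp hlt with h' | h'
          · exact h'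
          · exact absurd h' (lt_irrefl 1)
        have : α (m + 1) = α m * ρ (m + 1) := by
          rw [hrec', min_eq_left hx.le]
        rw [this, ham]
        unfold rhoProd
        rw [Finset.prod_Icc_succ_top (by omega : κ + 1 ≤ m + 1)]
      · have hk : κ = m + 1 := by omega
        subst hk
        simp [rhoProd, hκ1]
  have hsplit : ∀ a b c : ℕ, a ≤ b → b ≤ c →
      rhoProd ρ a b * rhoProd ρ b c = rhoProd ρ a c := by
    intro a b c hab hbc
    unfold rhoProd
    simp only [Finset.Icc_add_one_left_eq_Ioc]
    exact Finset.prod_Ioc_consecutive _ hab hbc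
  intro i hi1 hi2
  set k := kmin ρ n κ i with hkdef
  have hne : ({k' | Binding ρ n κ k' ∧ i ≤ k'} : Set ℕ).Nonempty := by
    refine ⟨n - 1, ⟨⟨by omega, le_refl _, ?_⟩, hi2⟩⟩
    intro j hj1 hj2; omega
  have hkmem : k ∈ {k' | Binding ρ n κ k' ∧ i ≤ k'} := Nat.sInf_mem hne
  obtain ⟨⟨hk1, hk2, _⟩, hik⟩ := hkmem
  have hαi : α i = rhoProd ρ κ i := hmain i (by omega) hi2
  have hαk : α k = rhoProd ρ κ k := hmain k (by omega) hk2
  have hsp := hsplit κ i k (by omega) hik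
  have hαk' : α k = α i * rhoProd ρ i k := by rw [hαk, hαi, hsp]
  have hPpos : 0 < rhoProd ρ i k := hprodpos i k hk2
  have hαipos : 0 < α i := by rw [hαi]; exact hprodpos κ i hi2
  have hαkpos : 0 < α k := by rw [hαk']; positivity
  have hbar : barAlpha ρ α n κ i = (rhoProd ρ i k)⁻¹ := by
    simp [barAlpha, show ¬ i ≤ κ by omega, hkdef]
  constructor
  · rw [hbar, hαk', eq_div_iff (by positivity)]
    field_simp
  · rw [hbar, ← one_div, lt_div_iff₀ hPpos]
    rw [← hαk']
    exact hαlt k (by omega) hk2
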